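/- Let b : ℝ → ℝ be three times differentiable with b''(u) > 0 for all u ∈ ℝ and satisfying |b'''(u)| ≤ M·b''(u) for all u ∈ ℝ, where M > 0. Then for every u ∈ ℝ and every s ∈ ℝ with |s| ≤ 1/M, one has b(u + s) − b(u) − s·b'(u) ≤ (e/2)·s²·b''(u). -/

import Mathlib

lemma second_deriv_growth
    (M : ℝ) (hM : 0 < M) (b : ℝ → ℝ)
    (hdiff3 : Differentiable ℝ (deriv (deriv b)))
    (hpos : ∀ u : ℝ, 0 < deriv (deriv b) u)
    (hsc : ∀ u : ℝ, |deriv (deriv (deriv b)) u| ≤ M * deriv (deriv b) u) :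
    ∀ u t : ℝ, |t| ≤ 1 / M →
      deriv (deriv b) (u + t) ≤ Real.exp 1 * deriv (deriv b) u := by
  intro u t ht
  set g : ℝ → ℝ := fun x => Real.log (deriv (deriv b) x) with hg
  have hg' : ∀ x : ℝ, HasDerivAt g
      (deriv (deriv (deriv b)) x / deriv (deriv b) x) x := fun x =>
    ((hdiff3 x).hasDerivAt).log (ne_of_gt (hpos x))
  have hbound : ∀ x : ℝ, |deriv (deriv (deriv b)) x / deriv (deriv b) x| ≤ M := by
    intro x
    rw [abs_div, abs_of_pos (hpos x), div_le_iff₀ (hpos x)]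
    exact hsc x
  have hmvt : ‖g (u + t) - g u‖ ≤ M * ‖(u + t) - u‖ := by
    apply Convex.norm_image_sub_le_of_norm_hasDerivWithin_le
      (f' := fun x => deriv (deriv (deriv b)) x / deriv (deriv b) x)
      (fun x _ => (hg' x).hasDerivWithinAt) (fun x _ => hbound x) convex_univ trivial trivial
  have h1 : g (u + t) - g u ≤ 1 := by
    have : ‖g (u + t) - g u‖ ≤ M * |t| := by simpa using hmvt
    have hMt : M * |t| ≤ 1 := by
      rw [le_div_iff₀ hM] at ht; linarith [mul_comm M |t|]
    calc g (u + t) - g u ≤ |g (u + t) - g u| := le_abs_self _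
      _ ≤ M * |t| := this
      _ ≤ 1 := hMt
  have hlog : Real.log (deriv (deriv b) (u + t)) ≤ Real.log (Real.exp 1 * deriv (deriv b) u) := by
    rw [Real.log_mul (Real.exp_ne_zero 1) (ne_of_gt (hpos u)), Real.log_exp]
    have : g (u + t) ≤ g u + 1 := by linarith
    simpa [hg] using this.trans (by linarith)
  have := (Real.log_le_log_iff (hpos (u + t))
    (mul_pos (Real.exp_pos 1) (hpos u))).mp hlog
  exact this

theorem log_partition_taylor_bound
    (M : ℝ) (hM : 0 < M) (b : ℝ → ℝ)
    (hdiff : Differentiable ℝ b) (hdiff2 : Differentiable ℝ (deriv b))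
    (hdiff3 : Differentiable ℝ (deriv (deriv b)))
    (hpos : ∀ u : ℝ, 0 < deriv (deriv b) u)
    (hsc : ∀ u : ℝ, |deriv (deriv (deriv b)) u| ≤ M * deriv (deriv b) u) :
    ∀ u s : ℝ, |s| ≤ 1 / M →
      b (u + s) - b u - s * deriv b u ≤ (Real.exp 1 / 2) * s ^ 2 * deriv (deriv b) u := by
  intro u s hs
  have hgrow := second_deriv_growth M hM b hdiff3 hpos hsc u
  set c : ℝ := deriv (deriv b) u with hc
  set φ : ℝ → ℝ := fun t => (Real.exp 1 / 2) * t ^ 2 * c - (b (u + t) - b u - t * deriv b u)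
    with hφ
  set ψ : ℝ → ℝ := fun t => Real.exp 1 * t * c - (deriv b (u + t) - deriv b u) with hψ
  -- derivatives
  have hφ' : ∀ t : ℝ, HasDerivAt φ (ψ t) t := by
    intro t
    have h1 : HasDerivAt (fun t : ℝ => b (u + t)) (deriv b (u + t)) t := by
      have := ((hdiff (u + t)).hasDerivAt).comp t ((hasDerivAt_id t).const_add u)
      simpa [Function.comp_def] using this
    have h2 : HasDerivAt (fun t : ℝ => (Real.exp 1 / 2) * t ^ 2 * c)
        (Real.exp 1 * t * c) t := by
      have := ((hasDerivAt_pow 2 t).const_mul (Real.exp 1 / 2)).mul_const c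
      exact this.congr_deriv (by rw [show (2:ℕ) - 1 = 1 from rfl]; ring)
    have h3 : HasDerivAt (fun t : ℝ => b (u + t) - b u - t * deriv b u)
        (deriv b (u + t) - deriv b u) t := by
      have := (h1.sub_const (b u)).sub ((hasDerivAt_id t).mul_const (deriv b u))
      simpa [Pi.sub_def] using this
    exact h2.sub h3
  have hψ' : ∀ t : ℝ, HasDerivAt ψ (Real.exp 1 * c - deriv (deriv b) (u + t)) t := by
    intro t
    have h1 : HasDerivAt (fun t : ℝ => deriv b (u + t)) (deriv (deriv b) (u + t)) t := by
      have := ((hdiff2 (u + t)).hasDerivAt).comp t ((hasDerivAt_id t).const_add u)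
      simpa [Function.comp_def] using this
    have h2 : HasDerivAt (fun t : ℝ => Real.exp 1 * t * c) (Real.exp 1 * c) t := by
      have := ((hasDerivAt_id t).const_mul (Real.exp 1)).mul_const c
      simpa using this
    have := h2.sub (h1.sub_const (deriv b u))
    simpa [Pi.sub_def] using this
  have hψmono : MonotoneOn ψ (Set.Icc (-(1 / M)) (1 / M)) := by
    apply monotoneOn_of_deriv_nonneg (convex_Icc _ _)
      (Continuous.continuousOn (continuous_iff_continuousAt.mpr
        fun x => (hψ' x).continuousAt))
      (fun t _ => (hψ' t).differentiableAt.differentiableWithinAt)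
    intro t ht
    rw [interior_Icc] at ht
    rw [(hψ' t).deriv]
    have habs : |t| ≤ 1 / M := abs_le.mpr ⟨le_of_lt ht.1, le_of_lt ht.2⟩
    linarith [hgrow t habs]
  have hψ0 : ψ 0 = 0 := by simp [hψ]
  have hφ0 : φ 0 = 0 := by simp [hφ]
  have hMpos : (0:ℝ) < 1 / M := by positivity
  have goal : 0 ≤ φ s := by
    rcases le_or_gt 0 s with hs0 | hs0
    · -- φ monotone on [0, 1/M]
      have hmono : MonotoneOn φ (Set.Icc 0 (1 / M)) := by
        apply monotoneOn_of_deriv_nonneg (convex_Icc _ _)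
          (Continuous.continuousOn (continuous_iff_continuousAt.mpr
            fun x => (hφ' x).continuousAt))
          (fun t _ => (hφ' t).differentiableAt.differentiableWithinAt)
        intro t ht
        rw [interior_Icc] at ht
        rw [(hφ' t).deriv]
        have h0mem : (0:ℝ) ∈ Set.Icc (-(1/M)) (1/M) := ⟨by linarith, le_of_lt hMpos⟩
        have htmem : t ∈ Set.Icc (-(1/M)) (1/M) := ⟨by linarith [ht.1], le_of_lt ht.2⟩
        have := hψmono h0mem htmem (le_of_lt ht.1)
        linarith [hψ0 ▸ this]
      have hsmem : s ∈ Set.Icc (0:ℝ) (1/M) := ⟨hs0, (le_abs_self s).trans hs⟩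
      have := hmono ⟨le_refl 0, le_of_lt hMpos⟩ hsmem hs0
      linarith [hφ0 ▸ this]
    · have hanti : AntitoneOn φ (Set.Icc (-(1/M)) 0) := by
        apply antitoneOn_of_deriv_nonpos (convex_Icc _ _)
          (Continuous.continuousOn (continuous_iff_continuousAt.mpr
            fun x => (hφ' x).continuousAt))
          (fun t _ => (hφ' t).differentiableAt.differentiableWithinAt)
        intro t ht
        rw [interior_Icc] at ht
        rw [(hφ' t).deriv]
        have h0mem : (0:ℝ) ∈ Set.Icc (-(1/M)) (1/M) := ⟨by linarith, le_of_lt hMpos⟩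
        have htmem : t ∈ Set.Icc (-(1/M)) (1/M) := ⟨le_of_lt ht.1, by linarith [ht.2]⟩
        have := hψmono htmem h0mem (le_of_lt ht.2)
        linarith [hψ0 ▸ this]
      have hsmem : s ∈ Set.Icc (-(1/M)) (0:ℝ) := by
        constructor
        · have := neg_abs_le s; linarith [abs_le.mp hs]
        · exact le_of_lt hs0
      have := hanti hsmem ⟨by linarith, le_refl 0⟩ (le_of_lt hs0)
      linarith [hφ0 ▸ this]
  simpa [hφ] using goal
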